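/- Let N ≥ 3 be a natural number, a > 0, and 0 < c ≤ N − 1. Then ((N−1)/a)·(ln(N/(N−1)) + 1/N − 1) < 1 + ln((N−1)/c). Consequently, in the weighted total effort game with a single dominant user and a < N−1, the sum of the Pivotal taxes, c·[((N−1)/a)(ln(N/(N−1)) − 1 + 1/N) − (1 + ln((N−1)/c))], is negative, i.e., the Pivotal mechanism always carries a budget deficit. -/

import Mathlib

open Real

/-- Single dominant user, case `a < N − 1`: the inequality
`((N−1)/a)(ln(N/(N−1)) + 1/N − 1) < 1 + ln((N−1)/c)`, showing that the sum of the
Pivotal taxes `c[((N−1)/a)(ln(N/(N−1)) − 1 + 1/N) − (1 + ln((N−1)/c))]` is negative,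
i.e., the Pivotal mechanism always carries a budget deficit. -/
theorem wte_dominant_user_pivotal_deficit
    (N : ℕ) (hN : 3 ≤ N) (a : ℝ) (ha : 0 < a)
    (c : ℝ) (hc : 0 < c) (hcN : c ≤ (N : ℝ) - 1) :
    ((N : ℝ) - 1) / a * (Real.log ((N : ℝ) / ((N : ℝ) - 1)) + 1 / N - 1) <
      1 + Real.log (((N : ℝ) - 1) / c) := by
  have hN3 : (3:ℝ) ≤ (N:ℝ) := by exact_mod_cast hN
  have hN1 : (0:ℝ) < (N:ℝ) - 1 := by linarith
  have hNpos : (0:ℝ) < (N:ℝ) := by linarith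
  -- log(N/(N-1)) ≤ 1/(N-1)
  have hlog : Real.log ((N:ℝ) / ((N:ℝ) - 1)) ≤ 1 / ((N:ℝ) - 1) := by
    have h1 : (N:ℝ) / ((N:ℝ) - 1) = 1 + 1 / ((N:ℝ) - 1) := by
      field_simp
      ring
    rw [h1]
    have := Real.log_le_sub_one_of_pos (x := 1 + 1 / ((N:ℝ) - 1)) (by positivity)
    linarith
  -- bracket negative
  have hbound : 1 / ((N:ℝ) - 1) + 1 / (N:ℝ) - 1 < 0 := by
    have h2 : 1 / ((N:ℝ) - 1) ≤ 1 / 2 := by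
      apply div_le_div_of_nonneg_left (by norm_num) (by norm_num) (by linarith)
    have h3 : 1 / (N:ℝ) ≤ 1 / 3 := by
      apply div_le_div_of_nonneg_left (by norm_num) (by norm_num) hN3
    linarith
  have hbr : Real.log ((N:ℝ) / ((N:ℝ) - 1)) + 1 / (N:ℝ) - 1 < 0 := by linarith
  have hlhs : ((N:ℝ) - 1) / a * (Real.log ((N:ℝ) / ((N:ℝ) - 1)) + 1 / N - 1) < 0 :=
    mul_neg_of_pos_of_neg (by positivity) hbr
  have hrhs : (0:ℝ) ≤ Real.log (((N:ℝ) - 1) / c) := by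
    apply Real.log_nonneg
    rw [le_div_iff₀ hc]; linarith
  linarith
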